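/- The index of L' is at most k−2: there exists χ ∈ L'^* whose coadjoint stabilizer L'_χ has dimension at most k−2. -/
import Mathlib


universe u v w

open Module

/-- The coadjoint stabilizer `g_χ = {X ∈ g : χ([X,Y]) = 0 for all Y ∈ g}` of a linear
functional `χ` on a Lie algebra `g`, as a linear subspace of `g`. -/
def coadjointStabilizer (𝕜 : Type u) [Field 𝕜] (g : Type v) [LieRing g] [LieAlgebra 𝕜 g]
    (χ : Module.Dual 𝕜 g) : Submodule 𝕜 g where
  carrier := {X | ∀ Y : g, χ ⁅X, Y⁆ = 0}
  add_mem' := by intro a b ha hb; intro Y; rw [add_lie, map_add, ha Y, hb Y, add_zero]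
  zero_mem' := by intro Y; rw [zero_lie, map_zero]
  smul_mem' := by intro c a ha; intro Y; rw [smul_lie, map_smul, ha Y, smul_zero]

/-- The index of a Lie algebra: the minimum over `χ ∈ g*` of the dimension of the
coadjoint stabilizer `g_χ`. -/
noncomputable def lieIndex (𝕜 : Type u) [Field 𝕜] (g : Type v) [LieRing g]
    [LieAlgebra 𝕜 g] : ℕ :=
  ⨅ χ : Module.Dual 𝕜 g, Module.finrank 𝕜 (coadjointStabilizer 𝕜 g χ)

/-- `b` is a basis of the Lie algebra `L'` of the paper: `Sum.inl i ↦ x_{i+1}`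
(for `i : Fin k`), `Sum.inr 0 ↦ D`, `Sum.inr 1 ↦ D'`, where the `x_i` commute,
`[D, D'] = 0`, `[D, x_i] = [D', x_i] = x_i` for `i = 1, …, k-2`, `[D, x_{k-1}] = x_k`,
`[D', x_{k-1}] = 0` and `[D, x_k] = [D', x_k] = 0`. -/
def IsL'Basis {𝕜 : Type u} [Field 𝕜] {L' : Type v} [LieRing L'] [LieAlgebra 𝕜 L']
    {k : ℕ} (b : Basis (Fin k ⊕ Fin 2) 𝕜 L') : Prop :=
  (∀ i j : Fin k, ⁅b (Sum.inl i), b (Sum.inl j)⁆ = 0) ∧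
  (⁅b (Sum.inr 0), b (Sum.inr 1)⁆ = 0) ∧
  (∀ i : Fin k, (i : ℕ) < k - 2 →
      ⁅b (Sum.inr 0), b (Sum.inl i)⁆ = b (Sum.inl i) ∧
      ⁅b (Sum.inr 1), b (Sum.inl i)⁆ = b (Sum.inl i)) ∧
  (∀ i j : Fin k, (i : ℕ) = k - 2 → (j : ℕ) = k - 1 →
      ⁅b (Sum.inr 0), b (Sum.inl i)⁆ = b (Sum.inl j) ∧
      ⁅b (Sum.inr 1), b (Sum.inl i)⁆ = 0) ∧
  (∀ i : Fin k, (i : ℕ) = k - 1 →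
      ⁅b (Sum.inr 0), b (Sum.inl i)⁆ = 0 ∧ ⁅b (Sum.inr 1), b (Sum.inl i)⁆ = 0)

/-- `X ↦ χ ⁅X, Y⁆` as a linear map. -/
def chiLie {𝕜 : Type u} [Field 𝕜] {L' : Type v} [LieRing L'] [LieAlgebra 𝕜 L']
    (χ : Module.Dual 𝕜 L') (Y : L') : L' →ₗ[𝕜] 𝕜 where
  toFun X := χ ⁅X, Y⁆
  map_add' a c := by simp [add_lie]
  map_smul' c a := by simp [smul_lie]

lemma chi_lie_eq {𝕜 : Type u} [Field 𝕜] {L' : Type v} [LieRing L'] [LieAlgebra 𝕜 L']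
    {k : ℕ} (b : Basis (Fin k ⊕ Fin 2) 𝕜 L') (χ : Module.Dual 𝕜 L') (Y X : L') :
    χ ⁅X, Y⁆ = ∑ j, b.repr X j * χ ⁅b j, Y⁆ := by
  have : χ ⁅X, Y⁆ = chiLie χ Y X := rfl
  rw [this]
  conv_lhs => rw [← b.sum_repr X]
  rw [map_sum]
  simp [chiLie]

set_option maxHeartbeats 1000000 in
/-- the index of `L'` is at most `k - 2`: some coadjoint stabilizer has
dimension at most `k - 2`. -/
theorem stmt3 (p k : ℕ) (hp : p.Prime) (hk : 3 ≤ k)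
    (𝕜 : Type u) [Field 𝕜] [IsAlgClosed 𝕜] [CharP 𝕜 p]
    (L' : Type v) [LieRing L'] [LieAlgebra 𝕜 L']
    (b : Basis (Fin k ⊕ Fin 2) 𝕜 L') (hb : IsL'Basis b) :
    (∃ χ : Module.Dual 𝕜 L',
      Module.finrank 𝕜 (coadjointStabilizer 𝕜 L' χ) ≤ k - 2) ∧
    lieIndex 𝕜 L' ≤ k - 2 := by
  classical
  obtain ⟨hxx, hDD, hlo, hmid, htop⟩ := hb
  have : Module.Finite 𝕜 L' := Module.Finite.of_basis b
  obtain ⟨i0, hi0⟩ : ∃ i : Fin k, (i : ℕ) = 0 := ⟨⟨0, by omega⟩, rfl⟩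
  obtain ⟨ik2, hik2⟩ : ∃ i : Fin k, (i : ℕ) = k - 2 := ⟨⟨k - 2, by omega⟩, rfl⟩
  obtain ⟨ik1, hik1⟩ : ∃ i : Fin k, (i : ℕ) = k - 1 := ⟨⟨k - 1, by omega⟩, rfl⟩
  have hne01 : i0 ≠ ik1 := by simp [Fin.ext_iff, hi0, hik1]; omega
  have hne02 : i0 ≠ ik2 := by simp [Fin.ext_iff, hi0, hik2]; omega
  have hne21 : ik2 ≠ ik1 := by simp [Fin.ext_iff, hik2, hik1]; omega
  obtain ⟨χ, hχ⟩ : ∃ χ : Module.Dual 𝕜 L',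
      χ = b.coord (Sum.inl i0) + b.coord (Sum.inl ik1) := ⟨_, rfl⟩
  -- values of χ on basis vectors
  have hχb : ∀ j, χ (b j) =
      (if j = Sum.inl i0 then (1 : 𝕜) else 0) + (if j = Sum.inl ik1 then 1 else 0) := by
    intro j
    rw [hχ]
    simp only [LinearMap.add_apply, Basis.coord_apply, Basis.repr_self_apply]
  have hχ0 : χ (b (Sum.inl i0)) = 1 := by
    rw [hχb]; simp [hne01]
  have hχk1 : χ (b (Sum.inl ik1)) = 1 := by
    rw [hχb]; simp [hne01.symm]
  -- bracket values [b j, x_{i0}]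
  have hbr0 : ∀ j, χ ⁅b j, b (Sum.inl i0)⁆ =
      (if j = Sum.inr 0 then (1 : 𝕜) else 0) + (if j = Sum.inr 1 then 1 else 0) := by
    intro j
    have h0 : (i0 : ℕ) < k - 2 := by omega
    rcases j with i | d
    · rw [hxx i i0]; simp
    · obtain rfl | rfl : d = 0 ∨ d = 1 := by revert d; decide
      · rw [(hlo i0 h0).1, hχ0]; simp
      · rw [(hlo i0 h0).2, hχ0]; simp
  have hbr2 : ∀ j, χ ⁅b j, b (Sum.inl ik2)⁆ =
      (if j = Sum.inr 0 then (1 : 𝕜) else 0) := by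
    intro j
    rcases j with i | d
    · rw [hxx i ik2]; simp
    · obtain rfl | rfl : d = 0 ∨ d = 1 := by revert d; decide
      · rw [(hmid ik2 ik1 hik2 hik1).1, hχk1]; simp
      · rw [(hmid ik2 ik1 hik2 hik1).2]; simp
  have hbrD : ∀ j, χ ⁅b j, b (Sum.inr 0)⁆ =
      -((if j = Sum.inl i0 then (1 : 𝕜) else 0) + (if j = Sum.inl ik2 then 1 else 0)) := by
    intro j
    rcases j with i | d
    · rw [← lie_skew, map_neg]
      rcases lt_trichotomy (i : ℕ) (k - 2) with h | h | h
      · rw [(hlo i h).1, hχb]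
        have : (Sum.inl i : Fin k ⊕ Fin 2) ≠ Sum.inl ik1 := by
          simp [Fin.ext_iff, hik1]; omega
        have h2 : ((Sum.inl i : Fin k ⊕ Fin 2) = Sum.inl ik2) ↔ False := by
          simp [Fin.ext_iff, hik2]; omega
        simp [this, h2]
      · have hieq : i = ik2 := by simp [Fin.ext_iff, hik2]; omega
        rw [(hmid i ik1 h hik1).1, hχk1]
        simp [hieq, hne02.symm]
      · have hieq : i = ik1 := by
          simp [Fin.ext_iff, hik1]; omega
        rw [(htop i (by omega)).1]
        have : (Sum.inl i : Fin k ⊕ Fin 2) ≠ Sum.inl i0 := by simp [Fin.ext_iff, hi0]; omega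
        have h2 : ((Sum.inl i : Fin k ⊕ Fin 2) = Sum.inl ik2) ↔ False := by
          simp [Fin.ext_iff, hik2]; omega
        simp [this, h2]
    · obtain rfl | rfl : d = 0 ∨ d = 1 := by revert d; decide
      · simp
      · rw [← lie_skew, hDD]; simp
  have hbrD' : ∀ j, χ ⁅b j, b (Sum.inr 1)⁆ =
      -(if j = Sum.inl i0 then (1 : 𝕜) else 0) := by
    intro j
    rcases j with i | d
    · rw [← lie_skew, map_neg]
      rcases lt_trichotomy (i : ℕ) (k - 2) with h | h | h
      · rw [(hlo i h).2, hχb]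
        have : (Sum.inl i : Fin k ⊕ Fin 2) ≠ Sum.inl ik1 := by simp [Fin.ext_iff, hik1]; omega
        simp [this]
      · rw [(hmid i ik1 h hik1).2]
        have : ¬ i = i0 := by simp [Fin.ext_iff, hi0]; omega
        simp [this]
      · rw [(htop i (by omega)).2]
        have : ¬ i = i0 := by simp [Fin.ext_iff, hi0]; omega
        simp [this]
    · obtain rfl | rfl : d = 0 ∨ d = 1 := by revert d; decide
      · rw [hDD]; simp
      · simp
  -- the stabilizer is contained in the span of the other basis vectors
  obtain ⟨T, hT⟩ : ∃ T : Finset (Fin k ⊕ Fin 2),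
      T = Finset.univ \ {Sum.inl i0, Sum.inl ik2, Sum.inr 0, Sum.inr 1} := ⟨_, rfl⟩
  have hsub : coadjointStabilizer 𝕜 L' χ ≤ Submodule.span 𝕜 (⇑b '' ↑T) := by
    intro X hX
    have hX' : ∀ Y : L', χ ⁅X, Y⁆ = 0 := hX
    have e0 : b.repr X (Sum.inr 0) + b.repr X (Sum.inr 1) = 0 := by
      have := hX' (b (Sum.inl i0))
      rw [chi_lie_eq b] at this
      simp only [hbr0, mul_add, Finset.sum_add_distrib, mul_ite, mul_one, mul_zero,
        Finset.sum_ite_eq' Finset.univ, Finset.mem_univ, if_true] at this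
      exact this
    have e2 : b.repr X (Sum.inr 0) = 0 := by
      have := hX' (b (Sum.inl ik2))
      rw [chi_lie_eq b] at this
      simp only [hbr2, mul_ite, mul_one, mul_zero,
        Finset.sum_ite_eq' Finset.univ, Finset.mem_univ, if_true] at this
      exact this
    have e1 : b.repr X (Sum.inr 1) = 0 := by
      rw [e2, zero_add] at e0; exact e0
    have eD : b.repr X (Sum.inl i0) + b.repr X (Sum.inl ik2) = 0 := by
      have := hX' (b (Sum.inr 0))
      rw [chi_lie_eq b] at this
      simp only [hbrD, mul_neg, mul_add, Finset.sum_neg_distrib, Finset.sum_add_distrib,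
        mul_ite, mul_one, mul_zero, Finset.sum_ite_eq' Finset.univ, Finset.mem_univ,
        if_true, neg_eq_zero] at this
      exact this
    have eD' : b.repr X (Sum.inl i0) = 0 := by
      have := hX' (b (Sum.inr 1))
      rw [chi_lie_eq b] at this
      simp only [hbrD', mul_neg, mul_ite, mul_one, mul_zero, Finset.sum_neg_distrib,
        Finset.sum_ite_eq' Finset.univ, Finset.mem_univ, if_true, neg_eq_zero] at this
      exact this
    have eK2 : b.repr X (Sum.inl ik2) = 0 := by rw [eD', zero_add] at eD; exact eD
    rw [Basis.mem_span_image]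
    intro j hj
    simp only [Finset.mem_coe, Finsupp.mem_support_iff] at hj
    simp only [hT, Finset.coe_sdiff, Finset.coe_univ, Set.mem_diff, Set.mem_univ,
      true_and, Finset.coe_insert, Set.mem_insert_iff, Finset.coe_singleton,
      Set.mem_singleton_iff, not_or]
    refine ⟨fun h => hj ?_, fun h => hj ?_, fun h => hj ?_, fun h => hj ?_⟩
    · rw [h]; exact eD'
    · rw [h]; exact eK2
    · rw [h]; exact e2
    · rw [h]; exact e1
  -- dimension count
  have hTcard : T.card = k - 2 := by
    rw [hT, Finset.card_sdiff_of_subset (Finset.subset_univ _)]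
    have h4 : ({Sum.inl i0, Sum.inl ik2, Sum.inr 0, Sum.inr 1} :
        Finset (Fin k ⊕ Fin 2)).card = 4 := by
      rw [Finset.card_insert_of_notMem (by simp [hne02]),
        Finset.card_insert_of_notMem (by simp),
        Finset.card_insert_of_notMem (by simp)]
      simp
    rw [h4, Finset.card_univ]
    simp only [Fintype.card_sum, Fintype.card_fin]
    omega
  have himg : ⇑b '' ↑T = ↑(T.image b) := (Finset.coe_image).symm
  rw [himg] at hsub
  haveI hfin : Module.Finite 𝕜 (Submodule.span 𝕜 (↑(T.image b) : Set L')) := inferInstance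
  have st1 : Module.finrank 𝕜 (coadjointStabilizer 𝕜 L' χ)
      ≤ Module.finrank 𝕜 (Submodule.span 𝕜 (↑(T.image b) : Set L')) :=
    Submodule.finrank_mono hsub
  have st2 : Module.finrank 𝕜 (Submodule.span 𝕜 (↑(T.image b) : Set L'))
      ≤ (T.image b).card := finrank_span_finset_le_card _
  have st3 : (T.image b).card ≤ T.card := Finset.card_image_le
  have hrank : Module.finrank 𝕜 (coadjointStabilizer 𝕜 L' χ) ≤ k - 2 := by
    omega
  refine ⟨⟨χ, hrank⟩, ?_⟩
  exact le_trans (ciInf_le (OrderBot.bddBelow _) χ) hrank
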